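/- The Taylor expansion of α(x,y) at (1,0) begins α(x,y) = 2(x−1)² + 2y² + 3(x−1)³ + 3(x−1)y² + O((|x−1|+|y|)⁴). -/

import Mathlib

/-- `ψ` is an analytic solution near `0` of the singular Cauchy problem
`3x ψ'' + 6x (ψ')³ − 4ψ (ψ')² − 3ψ' = 0`, `ψ(0) = 1`, `ψ'(0) = −3/4`. -/
def GavrilovODE (ψ : ℝ → ℝ) : Prop :=
  AnalyticAt ℝ ψ 0 ∧ ψ 0 = 1 ∧ deriv ψ 0 = -(3/4) ∧
    ∀ᶠ x in nhds (0:ℝ),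
      3 * x * deriv (deriv ψ) x + 6 * x * (deriv ψ x)^3
        - 4 * ψ x * (deriv ψ x)^2 - 3 * deriv ψ x = 0

/-- `α` is an analytic solution near `(1,0)` of the system
`∂α/∂x = F(x,α)`, `(∂α/∂y)² = G(x,α)` with `α(1,0) = 0` and `∂α/∂y` not
identically zero. -/
def SolvesSystem (F G : ℝ → ℝ → ℝ) (α : ℝ → ℝ → ℝ) : Prop :=
  AnalyticAt ℝ (fun q : ℝ × ℝ => α q.1 q.2) (1, 0) ∧
  α 1 0 = 0 ∧
  (¬ ∀ᶠ q : ℝ × ℝ in nhds (1, 0), deriv (α q.1) q.2 = 0) ∧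
  ∀ᶠ q : ℝ × ℝ in nhds (1, 0),
    deriv (fun x => α x q.2) q.1 = F q.1 (α q.1 q.2) ∧
    (deriv (α q.1) q.2)^2 = G q.1 (α q.1 q.2)


open Filter Topology

namespace GavAux

noncomputable section

def e1 : ℝ × ℝ := (1, 0)
def e2 : ℝ × ℝ := (0, 1)

lemma clm_apply_expand (L : ℝ × ℝ →L[ℝ] ℝ) (u v : ℝ) :
    L (u, v) = u * L e1 + v * L e2 := by
  have h : (u, v) = u • e1 + v • e2 := by simp [e1, e2, Prod.ext_iff]
  rw [h, map_add, map_smul, map_smul, smul_eq_mul, smul_eq_mul]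

lemma clm2_apply_expand (M : ℝ × ℝ →L[ℝ] (ℝ × ℝ →L[ℝ] ℝ)) (u v : ℝ) :
    M (u, v) = u • M e1 + v • M e2 := by
  have h : (u, v) = u • e1 + v • e2 := by simp [e1, e2, Prod.ext_iff]
  rw [h, map_add, map_smul, map_smul]

lemma clm_eq_zero (L : ℝ × ℝ →L[ℝ] ℝ) (h1 : L e1 = 0) (h2 : L e2 = 0) : L = 0 := by
  refine ContinuousLinearMap.ext fun w => ?_
  have h := clm_apply_expand L w.1 w.2
  simp only [h1, h2, mul_zero, add_zero] at h
  simpa using h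

def P1 (A : ℝ × ℝ → ℝ) : ℝ × ℝ → ℝ := fun q => fderiv ℝ A q e1
def P2 (A : ℝ × ℝ → ℝ) : ℝ × ℝ → ℝ := fun q => fderiv ℝ A q e2
def Hc (ψ : ℝ → ℝ) : ℝ → ℝ := fun a => 6*a*(1/deriv ψ a + 2*ψ a)
def Fc (ψ : ℝ → ℝ) (A : ℝ × ℝ → ℝ) : ℝ × ℝ → ℝ := fun q => -2*q.1*ψ (A q) + 2*q.1^3
def Gc (ψ : ℝ → ℝ) (A : ℝ × ℝ → ℝ) : ℝ × ℝ → ℝ :=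
  fun q => 12*q.1^2*A q - (Fc ψ A q)^2 - Hc ψ (A q)
def Kc (ψ : ℝ → ℝ) (A : ℝ × ℝ → ℝ) : ℝ × ℝ → ℝ :=
  fun q => 12*q.1^2 + 4*q.1*deriv ψ (A q)*Fc ψ A q - deriv (Hc ψ) (A q)
def Q1 (ψ : ℝ → ℝ) (A : ℝ × ℝ → ℝ) : ℝ × ℝ → ℝ :=
  fun q => -2*ψ (A q) + 6*q.1^2 - 2*q.1*deriv ψ (A q)*P1 A q
def Q2 (ψ : ℝ → ℝ) (A : ℝ × ℝ → ℝ) : ℝ × ℝ → ℝ :=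
  fun q => -2*q.1*deriv ψ (A q)*P2 A q

structure Ctx (ψ : ℝ → ℝ) (A : ℝ × ℝ → ℝ) : Prop where
  hψ : AnalyticAt ℝ ψ 0
  hψ0 : ψ 0 = 1
  hψd0 : deriv ψ 0 = -(3/4)
  hA : AnalyticAt ℝ A (1, 0)
  hA0 : A (1, 0) = 0
  hS1 : ∀ᶠ q in 𝓝 ((1:ℝ), (0:ℝ)), P1 A q = Fc ψ A q
  hS2 : ∀ᶠ q in 𝓝 ((1:ℝ), (0:ℝ)), (P2 A q)^2 = Gc ψ A q
  hS3 : ¬ ∀ᶠ q in 𝓝 ((1:ℝ), (0:ℝ)), P2 A q = 0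

variable {ψ : ℝ → ℝ} {A : ℝ × ℝ → ℝ}

lemma analyticAt_deriv {f : ℝ → ℝ} {x : ℝ} (hf : AnalyticAt ℝ f x) :
    AnalyticAt ℝ (deriv f) x := by
  have h := ((ContinuousLinearMap.apply ℝ ℝ (1:ℝ)).analyticAt _).comp (AnalyticAt.fderiv hf)
  exact h.congr (by filter_upwards with y using rfl)

section
variable (hc : Ctx ψ A)
include hc

lemma hψd_an : AnalyticAt ℝ (deriv ψ) 0 := analyticAt_deriv hc.hψ

lemma hψd_ne : deriv ψ 0 ≠ 0 := by rw [hc.hψd0]; norm_num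

lemma hHc_an : AnalyticAt ℝ (Hc ψ) 0 := by
  unfold Hc
  exact (analyticAt_const.mul analyticAt_id).mul
    ((analyticAt_const.div (hψd_an hc) (hψd_ne hc)).add (analyticAt_const.mul hc.hψ))

lemma hHd_an : AnalyticAt ℝ (deriv (Hc ψ)) 0 := analyticAt_deriv (hHc_an hc)

lemma hHd0 : deriv (Hc ψ) 0 = 4 := by
  have hdd : HasDerivAt (deriv ψ) (deriv (deriv ψ) 0) 0 :=
    (hψd_an hc).differentiableAt.hasDerivAt
  have hψ' : HasDerivAt ψ (deriv ψ 0) 0 := hc.hψ.differentiableAt.hasDerivAt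
  have hg : HasDerivAt (fun a => 1/deriv ψ a + 2*ψ a)
      (-(deriv (deriv ψ) 0) / (deriv ψ 0)^2 + 2 * deriv ψ 0) 0 := by
    have h1 : HasDerivAt (fun a => 1/deriv ψ a)
        ((0 * deriv ψ 0 - 1 * deriv (deriv ψ) 0) / (deriv ψ 0)^2) 0 :=
      (hasDerivAt_const 0 (1:ℝ)).div hdd (hψd_ne hc)
    have h2 : HasDerivAt (fun a => 2*ψ a) (2 * deriv ψ 0) 0 := hψ'.const_mul 2
    exact (h1.add h2).congr_deriv (by ring)
  have hH : HasDerivAt (Hc ψ)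
      (6 * (1/deriv ψ 0 + 2*ψ 0) + 6*(0:ℝ) * (-(deriv (deriv ψ) 0) / (deriv ψ 0)^2 + 2 * deriv ψ 0)) 0 := by
    have h0 : HasDerivAt (fun a : ℝ => 6*a) 6 0 := by simpa using (hasDerivAt_id (0:ℝ)).const_mul (6:ℝ)
    exact h0.mul hg
  rw [hH.deriv, hc.hψd0, hc.hψ0]
  norm_num

lemma ev_pack : ∀ᶠ q in 𝓝 ((1:ℝ), (0:ℝ)), AnalyticAt ℝ A q ∧ AnalyticAt ℝ ψ (A q) ∧
    AnalyticAt ℝ (deriv ψ) (A q) ∧ AnalyticAt ℝ (Hc ψ) (A q) ∧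
    AnalyticAt ℝ (deriv (Hc ψ)) (A q) := by
  have h0 : ∀ᶠ a in 𝓝 (0:ℝ), AnalyticAt ℝ ψ a ∧ AnalyticAt ℝ (deriv ψ) a ∧
      AnalyticAt ℝ (Hc ψ) a ∧ AnalyticAt ℝ (deriv (Hc ψ)) a := by
    filter_upwards [hc.hψ.eventually_analyticAt, (hψd_an hc).eventually_analyticAt,
      (hHc_an hc).eventually_analyticAt, (hHd_an hc).eventually_analyticAt] with a h1 h2 h3 h4
    exact ⟨h1, h2, h3, h4⟩
  have hcont : Filter.Tendsto A (𝓝 ((1:ℝ), (0:ℝ))) (𝓝 0) := by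
    have := hc.hA.continuousAt.tendsto
    rwa [hc.hA0] at this
  filter_upwards [hc.hA.eventually_analyticAt, hcont.eventually h0] with q h1 h2
  exact ⟨h1, h2.1, h2.2.1, h2.2.2.1, h2.2.2.2⟩

lemma ev_hasFDerivAt_A : ∀ᶠ z in 𝓝 ((1:ℝ), (0:ℝ)), HasFDerivAt A (fderiv ℝ A z) z := by
  filter_upwards [ev_pack hc] with z hz using hz.1.differentiableAt.hasFDerivAt

lemma ev_hasFDerivAt_Fc : ∀ᶠ z in 𝓝 ((1:ℝ), (0:ℝ)),
    HasFDerivAt (Fc ψ A) ((-2*ψ (A z) + 6*z.1^2) • ContinuousLinearMap.fst ℝ ℝ ℝ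
      + (-2*z.1*deriv ψ (A z)) • fderiv ℝ A z) z := by
  filter_upwards [ev_pack hc] with z hz
  obtain ⟨hAz, hψz, -, -, -⟩ := hz
  have hdA : HasFDerivAt A (fderiv ℝ A z) z := hAz.differentiableAt.hasFDerivAt
  have hψA : HasFDerivAt (fun q => ψ (A q)) (deriv ψ (A z) • fderiv ℝ A z) z :=
    (hψz.differentiableAt.hasDerivAt).comp_hasFDerivAt z hdA
  have hfst : HasFDerivAt (fun q : ℝ × ℝ => q.1) (ContinuousLinearMap.fst ℝ ℝ ℝ) z :=
    hasFDerivAt_fst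
  have h1 : HasFDerivAt (fun q : ℝ × ℝ => -2*q.1*ψ (A q))
      ((-2*z.1) • (deriv ψ (A z) • fderiv ℝ A z)
        + ψ (A z) • ((-2:ℝ) • ContinuousLinearMap.fst ℝ ℝ ℝ)) z := by
    have hcm : HasFDerivAt (fun q : ℝ × ℝ => -2*q.1)
        ((-2:ℝ) • ContinuousLinearMap.fst ℝ ℝ ℝ) z := hfst.const_mul (-2)
    exact hcm.mul hψA
  have hFcfun : Fc ψ A = fun q : ℝ × ℝ => -2*q.1*ψ (A q) + 2*(q.1*q.1*q.1) := by
    funext q; simp only [Fc]; ring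
  rw [hFcfun]
  have h := h1.add (((hfst.mul hfst).mul hfst).const_mul 2)
  refine h.congr_fderiv ?_
  refine ContinuousLinearMap.ext fun w => ?_
  simp only [ContinuousLinearMap.add_apply, ContinuousLinearMap.smul_apply,
    ContinuousLinearMap.coe_fst', smul_eq_mul, Pi.mul_apply]
  ring

lemma ev_dFc : ∀ᶠ z in 𝓝 ((1:ℝ), (0:ℝ)),
    fderiv ℝ (Fc ψ A) z e1 = Q1 ψ A z ∧ fderiv ℝ (Fc ψ A) z e2 = Q2 ψ A z := by
  filter_upwards [ev_hasFDerivAt_Fc hc] with z hz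
  rw [hz.fderiv]
  constructor <;>
  · simp only [ContinuousLinearMap.add_apply, ContinuousLinearMap.smul_apply,
      ContinuousLinearMap.coe_fst', smul_eq_mul, Q1, Q2, P1, P2, e1, e2]
    ring

lemma ev_an_P1P2 : ∀ᶠ z in 𝓝 ((1:ℝ), (0:ℝ)), AnalyticAt ℝ (P1 A) z ∧ AnalyticAt ℝ (P2 A) z := by
  filter_upwards [ev_pack hc] with z hz
  exact ⟨((ContinuousLinearMap.apply ℝ ℝ e1).analyticAt _).comp (AnalyticAt.fderiv hz.1),
    ((ContinuousLinearMap.apply ℝ ℝ e2).analyticAt _).comp (AnalyticAt.fderiv hz.1)⟩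

lemma ev_dGcE2 : ∀ᶠ z in 𝓝 ((1:ℝ), (0:ℝ)),
    fderiv ℝ (Gc ψ A) z e2 = Kc ψ A z * P2 A z := by
  filter_upwards [ev_pack hc, ev_hasFDerivAt_Fc hc] with z hz hFcz
  obtain ⟨hAz, hψz, hψdz, hHcz, hHdz⟩ := hz
  have hdA : HasFDerivAt A (fderiv ℝ A z) z := hAz.differentiableAt.hasFDerivAt
  have hfst : HasFDerivAt (fun q : ℝ × ℝ => q.1) (ContinuousLinearMap.fst ℝ ℝ ℝ) z :=
    hasFDerivAt_fst
  have hHcA : HasFDerivAt (fun q => Hc ψ (A q)) (deriv (Hc ψ) (A z) • fderiv ℝ A z) z :=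
    (hHcz.differentiableAt.hasDerivAt).comp_hasFDerivAt z hdA
  have h1 : HasFDerivAt (fun q : ℝ × ℝ => 12*(q.1*q.1)*A q)
      ((12*(z.1*z.1)) • fderiv ℝ A z + A z • ((12:ℝ) • (z.1 • ContinuousLinearMap.fst ℝ ℝ ℝ
        + z.1 • ContinuousLinearMap.fst ℝ ℝ ℝ))) z :=
    ((hfst.mul hfst).const_mul 12).mul hdA
  have h2 := hFcz.mul hFcz
  have hGcfun : Gc ψ A = fun q : ℝ × ℝ =>
      12*(q.1*q.1)*A q - Fc ψ A q * Fc ψ A q - Hc ψ (A q) := by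
    funext q; simp only [Gc]; ring
  rw [hGcfun, show (fun q : ℝ × ℝ => 12*(q.1*q.1)*A q - Fc ψ A q * Fc ψ A q - Hc ψ (A q))
      = ((fun q : ℝ × ℝ => 12*(q.1*q.1)*A q) - Fc ψ A * Fc ψ A - fun q => Hc ψ (A q)) from rfl,
    ((h1.sub h2).sub hHcA).fderiv]
  simp only [ContinuousLinearMap.add_apply, ContinuousLinearMap.sub_apply,
    ContinuousLinearMap.smul_apply, ContinuousLinearMap.coe_fst', smul_eq_mul,
    Kc, P2, e2, e1, Fc]
  norm_num
  ring

lemma ev_dP1_eq_dFc : ∀ᶠ z in 𝓝 ((1:ℝ), (0:ℝ)),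
    fderiv ℝ (P1 A) z = fderiv ℝ (Fc ψ A) z := by
  have h := hc.hS1.eventually_nhds
  filter_upwards [h] with z hz
  exact Filter.EventuallyEq.fderiv_eq hz

lemma ev_dP1 : ∀ᶠ z in 𝓝 ((1:ℝ), (0:ℝ)),
    fderiv ℝ (P1 A) z e1 = Q1 ψ A z ∧ fderiv ℝ (P1 A) z e2 = Q2 ψ A z := by
  filter_upwards [ev_dP1_eq_dFc hc, ev_dFc hc] with z h1 h2
  rw [h1]; exact h2

omit hc in
lemma fderiv_clm_eval {B : ℝ × ℝ → ℝ} {z : ℝ × ℝ} (hz : AnalyticAt ℝ B z) (k : ℝ × ℝ) :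
    fderiv ℝ (fun q => fderiv ℝ B q k) z = (fderiv ℝ (fderiv ℝ B) z).flip k := by
  have hd : DifferentiableAt ℝ (fderiv ℝ B) z := (AnalyticAt.fderiv hz).differentiableAt
  have h := fderiv_clm_apply (c := fderiv ℝ B) (u := fun _ => k) hd (differentiableAt_const k)
  simpa using h

lemma ev_symm : ∀ᶠ z in 𝓝 ((1:ℝ), (0:ℝ)),
    fderiv ℝ (P2 A) z e1 = fderiv ℝ (P1 A) z e2 := by
  filter_upwards [ev_pack hc] with z hz
  have hsym := (hz.1.contDiffAt.of_le le_top : ContDiffAt ℝ 2 A z).isSymmSndFDerivAt (by simp)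
  have h1 : fderiv ℝ (P2 A) z e1 = fderiv ℝ (fderiv ℝ A) z e1 e2 := by
    rw [show P2 A = fun q => fderiv ℝ A q e2 from rfl, fderiv_clm_eval hz.1 e2]; rfl
  have h2 : fderiv ℝ (P1 A) z e2 = fderiv ℝ (fderiv ℝ A) z e2 e1 := by
    rw [show P1 A = fun q => fderiv ℝ A q e1 from rfl, fderiv_clm_eval hz.1 e1]; rfl
  rw [h1, h2, hsym e1 e2]

lemma ev_sq_eq : ∀ᶠ z in 𝓝 ((1:ℝ), (0:ℝ)),
    P2 A z * (2 * fderiv ℝ (P2 A) z e2 - Kc ψ A z) = 0 := by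
  filter_upwards [ev_an_P1P2 hc, hc.hS2.eventually_nhds, ev_dGcE2 hc] with z hz hsq hGc
  have hP2d : HasFDerivAt (P2 A) (fderiv ℝ (P2 A) z) z := hz.2.differentiableAt.hasFDerivAt
  have hsqd : HasFDerivAt (fun q => (P2 A q)^2)
      (P2 A z • fderiv ℝ (P2 A) z + P2 A z • fderiv ℝ (P2 A) z) z := by
    have hfun : (fun q => (P2 A q)^2) = fun q => P2 A q * P2 A q := by
      funext q; ring
    rw [hfun]; exact hP2d.mul hP2d
  have heq : fderiv ℝ (fun q => (P2 A q)^2) z = fderiv ℝ (Gc ψ A) z :=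
    Filter.EventuallyEq.fderiv_eq hsq
  have := congrArg (fun L : ℝ × ℝ →L[ℝ] ℝ => L e2) heq
  rw [hsqd.fderiv] at this
  simp only [ContinuousLinearMap.add_apply, ContinuousLinearMap.smul_apply, smul_eq_mul] at this
  rw [hGc] at this
  nlinarith [this]

lemma ev_key : ∀ᶠ z in 𝓝 ((1:ℝ), (0:ℝ)),
    2 * fderiv ℝ (P2 A) z e2 = Kc ψ A z := by
  have hcontKc : ∀ᶠ z in 𝓝 ((1:ℝ), (0:ℝ)),
      ContinuousAt (fun w => 2 * fderiv ℝ (P2 A) w e2 - Kc ψ A w) z := by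
    filter_upwards [ev_pack hc, ev_an_P1P2 hc] with z hz hP
    have h1 : ContinuousAt (fun w => fderiv ℝ (P2 A) w e2) z :=
      (((ContinuousLinearMap.apply ℝ ℝ e2).analyticAt _).comp
        (AnalyticAt.fderiv hP.2)).continuousAt
    have h2 : ContinuousAt (Kc ψ A) z := by
      have hA : ContinuousAt A z := hz.1.continuousAt
      have hFc : ContinuousAt (Fc ψ A) z := by
        exact (((continuousAt_const.mul continuousAt_fst).mul
          (hz.2.1.continuousAt.comp hA)).add ((continuousAt_fst.pow 3).const_mul 2))
      exact ((continuousAt_fst.pow 2).const_mul 12).add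
        ((((continuousAt_const.mul continuousAt_fst).mul
          (hz.2.2.1.continuousAt.comp hA)).mul hFc)) |>.sub
          (hz.2.2.2.2.continuousAt.comp hA)
    exact (continuousAt_const.mul h1).sub h2
  obtain ⟨r, hr, hball⟩ := Metric.eventually_nhds_iff_ball.1
    ((ev_an_P1P2 hc).and ((ev_sq_eq hc).and hcontKc))
  have hKeyBall : ∀ z ∈ Metric.ball ((1:ℝ), (0:ℝ)) r,
      2 * fderiv ℝ (P2 A) z e2 - Kc ψ A z = 0 := by
    intro z hzB
    by_contra hne
    have hev0 : (P2 A) =ᶠ[𝓝 z] 0 := by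
      have hgne : ∀ᶠ w in 𝓝 z, 2 * fderiv ℝ (P2 A) w e2 - Kc ψ A w ≠ 0 :=
        (hball z hzB).2.2.eventually_ne hne
      have hopen : ∀ᶠ w in 𝓝 z, w ∈ Metric.ball ((1:ℝ), (0:ℝ)) r :=
        Metric.isOpen_ball.mem_nhds hzB
      filter_upwards [hgne, hopen] with w hw hwB
      have := (hball w hwB).2.1
      rcases mul_eq_zero.1 this with h | h
      · exact h
      · exact absurd h hw
    have hzero : Set.EqOn (P2 A) 0 (Metric.ball ((1:ℝ), (0:ℝ)) r) := by
      apply AnalyticOnNhd.eqOn_zero_of_preconnected_of_eventuallyEq_zero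
        (fun w hw => (hball w hw).1.2)
        ((convex_ball _ _).isPreconnected) hzB hev0
    refine hc.hS3 ?_
    filter_upwards [Metric.ball_mem_nhds ((1:ℝ),(0:ℝ)) hr] with w hw
    exact hzero hw
  filter_upwards [Metric.ball_mem_nhds ((1:ℝ),(0:ℝ)) hr] with z hz
  have := hKeyBall z hz
  linarith

lemma vFc : Fc ψ A (1, 0) = 0 := by
  simp [Fc, hc.hA0, hc.hψ0]

lemma vP1 : P1 A (1, 0) = 0 := by
  rw [hc.hS1.self_of_nhds, vFc hc]

omit hc in
lemma vHc0 : Hc ψ (0:ℝ) = 0 := by simp [Hc]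

lemma vP2 : P2 A (1, 0) = 0 := by
  have h := hc.hS2.self_of_nhds
  have : Gc ψ A (1, 0) = 0 := by
    simp [Gc, hc.hA0, vFc hc, vHc0]
  rw [this] at h
  exact pow_eq_zero_iff (n := 2) (by norm_num) |>.1 h

lemma vdA : fderiv ℝ A (1, 0) = 0 := clm_eq_zero _ (vP1 hc) (vP2 hc)

lemma vKc : Kc ψ A (1, 0) = 8 := by
  simp [Kc, hc.hA0, hc.hψd0, vFc hc, hHd0 hc]
  norm_num

lemma vQ1 : Q1 ψ A (1, 0) = 4 := by
  simp [Q1, hc.hA0, hc.hψ0, vP1 hc]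
  norm_num

lemma vQ2 : Q2 ψ A (1, 0) = 0 := by
  simp [Q2]
  simp [vP2 hc]

lemma vdP1e1 : fderiv ℝ (P1 A) (1, 0) e1 = 4 := by
  rw [(ev_dP1 hc).self_of_nhds.1, vQ1 hc]

lemma vdP1e2 : fderiv ℝ (P1 A) (1, 0) e2 = 0 := by
  rw [(ev_dP1 hc).self_of_nhds.2, vQ2 hc]

lemma vdP2e1 : fderiv ℝ (P2 A) (1, 0) e1 = 0 := by
  rw [(ev_symm hc).self_of_nhds, vdP1e2 hc]

lemma vdP2e2 : fderiv ℝ (P2 A) (1, 0) e2 = 4 := by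
  have h := (ev_key hc).self_of_nhds
  rw [vKc hc] at h
  linarith

lemma hA'0 : HasFDerivAt A (0 : ℝ × ℝ →L[ℝ] ℝ) (1, 0) := by
  rw [← vdA hc]
  exact hc.hA.differentiableAt.hasFDerivAt

lemma comp_zero {g : ℝ → ℝ} (hg : DifferentiableAt ℝ g 0) :
    HasFDerivAt (fun q => g (A q)) (0 : ℝ × ℝ →L[ℝ] ℝ) (1, 0) := by
  have h0 : HasDerivAt g (deriv g 0) (A (1, 0)) := by
    rw [hc.hA0]; exact hg.hasDerivAt
  have h := h0.comp_hasFDerivAt (1, 0) (hA'0 hc)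
  simpa [Function.comp_def] using h

lemma hP1d : HasFDerivAt (P1 A) (fderiv ℝ (P1 A) (1, 0)) (1, 0) :=
  (ev_an_P1P2 hc).self_of_nhds.1.differentiableAt.hasFDerivAt

lemma hP2d : HasFDerivAt (P2 A) (fderiv ℝ (P2 A) (1, 0)) (1, 0) :=
  (ev_an_P1P2 hc).self_of_nhds.2.differentiableAt.hasFDerivAt

lemma hFc' : HasFDerivAt (Fc ψ A) (fderiv ℝ (P1 A) (1, 0)) (1, 0) := by
  rw [(ev_dP1_eq_dFc hc).self_of_nhds]
  exact ((ev_hasFDerivAt_Fc hc).self_of_nhds).differentiableAt.hasFDerivAt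

lemma dQ1 : HasFDerivAt (Q1 ψ A)
    ((12:ℝ) • ContinuousLinearMap.fst ℝ ℝ ℝ + (3/2:ℝ) • fderiv ℝ (P1 A) (1, 0)) (1, 0) := by
  have hfst : HasFDerivAt (fun q : ℝ × ℝ => q.1) (ContinuousLinearMap.fst ℝ ℝ ℝ) ((1:ℝ),(0:ℝ)) :=
    hasFDerivAt_fst
  have hψA : HasFDerivAt (fun q => ψ (A q)) (0 : ℝ × ℝ →L[ℝ] ℝ) (1, 0) :=
    comp_zero hc hc.hψ.differentiableAt
  have hψdA : HasFDerivAt (fun q => deriv ψ (A q)) (0 : ℝ × ℝ →L[ℝ] ℝ) (1, 0) :=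
    comp_zero hc (hψd_an hc).differentiableAt
  have hQfun : Q1 ψ A = fun q : ℝ × ℝ =>
      (-2)*ψ (A q) + 6*(q.1*q.1) - (2*q.1)*deriv ψ (A q)*P1 A q := by
    funext q; simp only [Q1]; ring
  rw [hQfun]
  have h := ((hψA.const_mul (-2)).add ((hfst.mul hfst).const_mul 6)).sub
    ((((hfst.const_mul 2).mul hψdA).mul (hP1d hc)))
  refine h.congr_fderiv ?_
  refine ContinuousLinearMap.ext fun w => ?_
  simp only [ContinuousLinearMap.add_apply, ContinuousLinearMap.sub_apply,
    ContinuousLinearMap.smul_apply, ContinuousLinearMap.coe_fst',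
    ContinuousLinearMap.zero_apply, smul_eq_mul, Pi.mul_apply, hc.hA0, hc.hψ0, hc.hψd0, vP1 hc]
  ring

lemma dQ2 : HasFDerivAt (Q2 ψ A) ((3/2:ℝ) • fderiv ℝ (P2 A) (1, 0)) (1, 0) := by
  have hfst : HasFDerivAt (fun q : ℝ × ℝ => q.1) (ContinuousLinearMap.fst ℝ ℝ ℝ) ((1:ℝ),(0:ℝ)) :=
    hasFDerivAt_fst
  have hψdA : HasFDerivAt (fun q => deriv ψ (A q)) (0 : ℝ × ℝ →L[ℝ] ℝ) (1, 0) :=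
    comp_zero hc (hψd_an hc).differentiableAt
  have hQfun : Q2 ψ A = fun q : ℝ × ℝ => ((-2)*q.1)*deriv ψ (A q)*P2 A q := by
    funext q; simp only [Q2]; try ring
  rw [hQfun]
  have h := (((hfst.const_mul (-2)).mul hψdA).mul (hP2d hc))
  refine h.congr_fderiv ?_
  refine ContinuousLinearMap.ext fun w => ?_
  simp only [ContinuousLinearMap.add_apply, ContinuousLinearMap.smul_apply,
    ContinuousLinearMap.coe_fst', ContinuousLinearMap.zero_apply, smul_eq_mul, Pi.mul_apply,
    hc.hA0, hc.hψd0, vP2 hc]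
  ring

lemma dKc : HasFDerivAt (Kc ψ A)
    ((24:ℝ) • ContinuousLinearMap.fst ℝ ℝ ℝ + (-3:ℝ) • fderiv ℝ (P1 A) (1, 0)) (1, 0) := by
  have hfst : HasFDerivAt (fun q : ℝ × ℝ => q.1) (ContinuousLinearMap.fst ℝ ℝ ℝ) ((1:ℝ),(0:ℝ)) :=
    hasFDerivAt_fst
  have hψdA : HasFDerivAt (fun q => deriv ψ (A q)) (0 : ℝ × ℝ →L[ℝ] ℝ) (1, 0) :=
    comp_zero hc (hψd_an hc).differentiableAt
  have hHdA : HasFDerivAt (fun q => deriv (Hc ψ) (A q)) (0 : ℝ × ℝ →L[ℝ] ℝ) (1, 0) :=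
    comp_zero hc (hHd_an hc).differentiableAt
  have hKfun : Kc ψ A = fun q : ℝ × ℝ =>
      12*(q.1*q.1) + (4*q.1)*deriv ψ (A q)*Fc ψ A q - deriv (Hc ψ) (A q) := by
    funext q; simp only [Kc]; ring
  rw [hKfun]
  have h := (((hfst.mul hfst).const_mul 12).add
    (((hfst.const_mul 4).mul hψdA).mul (hFc' hc))).sub hHdA
  refine h.congr_fderiv ?_
  refine ContinuousLinearMap.ext fun w => ?_
  simp only [ContinuousLinearMap.add_apply, ContinuousLinearMap.sub_apply,
    ContinuousLinearMap.smul_apply, ContinuousLinearMap.coe_fst',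
    ContinuousLinearMap.zero_apply, smul_eq_mul, Pi.mul_apply, hc.hA0, hc.hψd0, vFc hc]
  ring

omit hc in
lemma clm_apply_expand' (L : ℝ × ℝ →L[ℝ] ℝ) (w : ℝ × ℝ) :
    L w = w.1 * L e1 + w.2 * L e2 := by
  conv_lhs => rw [← Prod.mk.eta (p := w)]
  exact clm_apply_expand L w.1 w.2

omit hc in
lemma clm2_apply_expand' (M : ℝ × ℝ →L[ℝ] (ℝ × ℝ →L[ℝ] ℝ)) (w : ℝ × ℝ) :
    M w = w.1 • M e1 + w.2 • M e2 := by
  conv_lhs => rw [← Prod.mk.eta (p := w)]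
  exact clm2_apply_expand M w.1 w.2

omit hc in
lemma fderiv_eval {F : Type*} [NormedAddCommGroup F] [NormedSpace ℝ F]
    {B : ℝ × ℝ → (ℝ × ℝ) →L[ℝ] F} {z : ℝ × ℝ} (h : DifferentiableAt ℝ B z) (k : ℝ × ℝ) :
    fderiv ℝ (fun q => B q k) z = (fderiv ℝ B z).flip k := by
  have h2 := fderiv_clm_apply (c := B) (u := fun _ => k) h (differentiableAt_const k)
  simpa using h2

lemma ds11 : fderiv ℝ (fun z => fderiv ℝ (P1 A) z e1) ((1:ℝ), (0:ℝ))
    = (12:ℝ) • ContinuousLinearMap.fst ℝ ℝ ℝ + (3/2:ℝ) • fderiv ℝ (P1 A) (1, 0) := by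
  have hev : (fun z => fderiv ℝ (P1 A) z e1) =ᶠ[𝓝 ((1:ℝ), (0:ℝ))] Q1 ψ A :=
    (ev_dP1 hc).mono fun z h => h.1
  rw [hev.fderiv_eq, (dQ1 hc).fderiv]

lemma ds21 : fderiv ℝ (fun z => fderiv ℝ (P1 A) z e2) ((1:ℝ), (0:ℝ))
    = (3/2:ℝ) • fderiv ℝ (P2 A) (1, 0) := by
  have hev : (fun z => fderiv ℝ (P1 A) z e2) =ᶠ[𝓝 ((1:ℝ), (0:ℝ))] Q2 ψ A :=
    (ev_dP1 hc).mono fun z h => h.2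
  rw [hev.fderiv_eq, (dQ2 hc).fderiv]

lemma ds12 : fderiv ℝ (fun z => fderiv ℝ (P2 A) z e1) ((1:ℝ), (0:ℝ))
    = (3/2:ℝ) • fderiv ℝ (P2 A) (1, 0) := by
  have hev : (fun z => fderiv ℝ (P2 A) z e1) =ᶠ[𝓝 ((1:ℝ), (0:ℝ))] Q2 ψ A := by
    filter_upwards [ev_symm hc, ev_dP1 hc] with z h1 h2
    rw [h1, h2.2]
  rw [hev.fderiv_eq, (dQ2 hc).fderiv]

lemma ds22 : fderiv ℝ (fun z => fderiv ℝ (P2 A) z e2) ((1:ℝ), (0:ℝ))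
    = (1/2:ℝ) • ((24:ℝ) • ContinuousLinearMap.fst ℝ ℝ ℝ
        + (-3:ℝ) • fderiv ℝ (P1 A) (1, 0)) := by
  have hev : (fun z => fderiv ℝ (P2 A) z e2) =ᶠ[𝓝 ((1:ℝ), (0:ℝ))]
      (fun z => (1/2:ℝ) * Kc ψ A z) := by
    filter_upwards [ev_key hc] with z h1
    linarith
  rw [hev.fderiv_eq, ((dKc hc).const_mul (1/2:ℝ)).fderiv]

lemma ev_dPk_flip : ∀ᶠ z in 𝓝 ((1:ℝ), (0:ℝ)),
    fderiv ℝ (P1 A) z = (fderiv ℝ (fderiv ℝ A) z).flip e1 ∧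
    fderiv ℝ (P2 A) z = (fderiv ℝ (fderiv ℝ A) z).flip e2 := by
  filter_upwards [ev_pack hc] with z hz
  have hd : DifferentiableAt ℝ (fderiv ℝ A) z := (AnalyticAt.fderiv hz.1).differentiableAt
  exact ⟨fderiv_eval hd e1, fderiv_eval hd e2⟩

lemma N_apply (j k a : ℝ × ℝ) :
    fderiv ℝ (fun z => fderiv ℝ (fderiv ℝ A) z j k) ((1:ℝ), (0:ℝ)) a
      = fderiv ℝ (fderiv ℝ (fderiv ℝ A)) (1, 0) a j k := by
  have hc2 : DifferentiableAt ℝ (fderiv ℝ (fderiv ℝ A)) (1, 0) :=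
    (AnalyticAt.fderiv (AnalyticAt.fderiv hc.hA)).differentiableAt
  have hB2 : DifferentiableAt ℝ (fun z => fderiv ℝ (fderiv ℝ A) z j) (1, 0) :=
    hc2.clm_apply (differentiableAt_const j)
  rw [fderiv_eval hB2 k, fderiv_eval hc2 j]
  rfl

lemma N_entry (j k : ℝ × ℝ) (s : ℝ × ℝ → ℝ)
    (hs : ∀ᶠ z in 𝓝 ((1:ℝ), (0:ℝ)), fderiv ℝ (fderiv ℝ A) z j k = s z) (a : ℝ × ℝ) :
    fderiv ℝ (fderiv ℝ (fderiv ℝ A)) (1, 0) a j k = fderiv ℝ s ((1:ℝ), (0:ℝ)) a := by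
  rw [← N_apply hc j k a]
  have heq : (fun z => fderiv ℝ (fderiv ℝ A) z j k) =ᶠ[𝓝 ((1:ℝ), (0:ℝ))] s := hs
  rw [heq.fderiv_eq]

lemma iFD2_diag (w : ℝ × ℝ) :
    iteratedFDeriv ℝ 2 A (1, 0) (fun _ => w) = 4*w.1^2 + 4*w.2^2 := by
  rw [iteratedFDeriv_two_apply]
  show fderiv ℝ (fderiv ℝ A) (1, 0) w w = _
  have hd : DifferentiableAt ℝ (fderiv ℝ A) ((1:ℝ), (0:ℝ)) :=
    (AnalyticAt.fderiv hc.hA).differentiableAt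
  have h1 : ∀ a : ℝ × ℝ, fderiv ℝ (fderiv ℝ A) (1, 0) a e1 = fderiv ℝ (P1 A) (1, 0) a := by
    intro a
    rw [show P1 A = fun q => fderiv ℝ A q e1 from rfl, fderiv_eval hd e1]
    rfl
  have h2 : ∀ a : ℝ × ℝ, fderiv ℝ (fderiv ℝ A) (1, 0) a e2 = fderiv ℝ (P2 A) (1, 0) a := by
    intro a
    rw [show P2 A = fun q => fderiv ℝ A q e2 from rfl, fderiv_eval hd e2]
    rfl
  rw [clm_apply_expand' (fderiv ℝ (fderiv ℝ A) (1, 0) w) w, h1 w, h2 w,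
    clm_apply_expand' (fderiv ℝ (P1 A) (1, 0)) w, clm_apply_expand' (fderiv ℝ (P2 A) (1, 0)) w,
    vdP1e1 hc, vdP1e2 hc, vdP2e1 hc, vdP2e2 hc]
  ring

lemma iFD3_diag (w : ℝ × ℝ) :
    iteratedFDeriv ℝ 3 A (1, 0) (fun _ => w) = 18*w.1^3 + 18*w.1*w.2^2 := by
  rw [show (3:ℕ) = 2 + 1 from rfl, iteratedFDeriv_succ_apply_right, iteratedFDeriv_two_apply]
  show fderiv ℝ (fderiv ℝ (fderiv ℝ A)) (1, 0) w w w = _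
  have hf11 : ∀ᶠ z in 𝓝 ((1:ℝ), (0:ℝ)),
      fderiv ℝ (fderiv ℝ A) z e1 e1 = fderiv ℝ (P1 A) z e1 :=
    (ev_dPk_flip hc).mono fun z h => by rw [h.1]; rfl
  have hf12 : ∀ᶠ z in 𝓝 ((1:ℝ), (0:ℝ)),
      fderiv ℝ (fderiv ℝ A) z e1 e2 = fderiv ℝ (P2 A) z e1 :=
    (ev_dPk_flip hc).mono fun z h => by rw [h.2]; rfl
  have hf21 : ∀ᶠ z in 𝓝 ((1:ℝ), (0:ℝ)),
      fderiv ℝ (fderiv ℝ A) z e2 e1 = fderiv ℝ (P1 A) z e2 :=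
    (ev_dPk_flip hc).mono fun z h => by rw [h.1]; rfl
  have hf22 : ∀ᶠ z in 𝓝 ((1:ℝ), (0:ℝ)),
      fderiv ℝ (fderiv ℝ A) z e2 e2 = fderiv ℝ (P2 A) z e2 :=
    (ev_dPk_flip hc).mono fun z h => by rw [h.2]; rfl
  have h11 : fderiv ℝ (fderiv ℝ (fderiv ℝ A)) (1, 0) w e1 e1
      = 12*w.1 + (3/2)*(fderiv ℝ (P1 A) (1, 0) w) := by
    rw [N_entry hc e1 e1 _ hf11, ds11 hc]
    simp only [ContinuousLinearMap.add_apply, ContinuousLinearMap.smul_apply,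
      ContinuousLinearMap.coe_fst', smul_eq_mul]
  have h12 : fderiv ℝ (fderiv ℝ (fderiv ℝ A)) (1, 0) w e1 e2
      = (3/2)*(fderiv ℝ (P2 A) (1, 0) w) := by
    rw [N_entry hc e1 e2 _ hf12, ds12 hc]
    simp only [ContinuousLinearMap.smul_apply, smul_eq_mul]
  have h21 : fderiv ℝ (fderiv ℝ (fderiv ℝ A)) (1, 0) w e2 e1
      = (3/2)*(fderiv ℝ (P2 A) (1, 0) w) := by
    rw [N_entry hc e2 e1 _ hf21, ds21 hc]
    simp only [ContinuousLinearMap.smul_apply, smul_eq_mul]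
  have h22 : fderiv ℝ (fderiv ℝ (fderiv ℝ A)) (1, 0) w e2 e2
      = (1/2)*(24*w.1 + (-3)*(fderiv ℝ (P1 A) (1, 0) w)) := by
    rw [N_entry hc e2 e2 _ hf22, ds22 hc]
    simp only [ContinuousLinearMap.add_apply, ContinuousLinearMap.smul_apply,
      ContinuousLinearMap.coe_fst', smul_eq_mul]
  rw [clm2_apply_expand' (fderiv ℝ (fderiv ℝ (fderiv ℝ A)) (1, 0) w) w]
  simp only [ContinuousLinearMap.add_apply, ContinuousLinearMap.smul_apply, smul_eq_mul]
  rw [clm_apply_expand' (fderiv ℝ (fderiv ℝ (fderiv ℝ A)) (1, 0) w e1) w,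
    clm_apply_expand' (fderiv ℝ (fderiv ℝ (fderiv ℝ A)) (1, 0) w e2) w,
    h11, h12, h21, h22,
    clm_apply_expand' (fderiv ℝ (P1 A) (1, 0)) w, clm_apply_expand' (fderiv ℝ (P2 A) (1, 0)) w,
    vdP1e1 hc, vdP1e2 hc, vdP2e1 hc, vdP2e2 hc]
  ring

lemma iFD0_diag (w : ℝ × ℝ) : iteratedFDeriv ℝ 0 A (1, 0) (fun _ => w) = 0 := by
  rw [iteratedFDeriv_zero_apply, hc.hA0]

lemma iFD1_diag (w : ℝ × ℝ) : iteratedFDeriv ℝ 1 A (1, 0) (fun _ => w) = 0 := by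
  rw [iteratedFDeriv_one_apply, vdA hc]
  rfl

lemma main_bound : ∃ C : ℝ, ∀ᶠ q : ℝ × ℝ in 𝓝 ((1:ℝ), (0:ℝ)),
    |A q - (2*(q.1 - 1)^2 + 2*q.2^2 + 3*(q.1 - 1)^3 + 3*(q.1 - 1)*q.2^2)|
      ≤ C * (|q.1 - 1| + |q.2|)^4 := by
  obtain ⟨p, r, hp⟩ := hc.hA
  have hps : ∀ w : ℝ × ℝ, p.partialSum 4 w = 2*w.1^2 + 2*w.2^2 + 3*w.1^3 + 3*w.1*w.2^2 := by
    intro w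
    have h0 := hp.factorial_smul (y := w) 0
    have h1 := hp.factorial_smul (y := w) 1
    have h2 := hp.factorial_smul (y := w) 2
    have h3 := hp.factorial_smul (y := w) 3
    rw [iFD0_diag hc w] at h0
    rw [iFD1_diag hc w] at h1
    rw [iFD2_diag hc w] at h2
    rw [iFD3_diag hc w] at h3
    rw [nsmul_eq_mul] at h0 h1 h2 h3
    norm_num [Nat.factorial] at h0 h1 h2 h3
    simp only [FormalMultilinearSeries.partialSum, Finset.sum_range_succ,
      Finset.sum_range_zero]
    linarith [h2, h3]
  have hO := hp.hasFPowerSeriesAt.isBigO_sub_partialSum_pow 4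
  rw [Asymptotics.isBigO_iff] at hO
  obtain ⟨C, hC⟩ := hO
  refine ⟨|C|, ?_⟩
  have ht : Filter.Tendsto (fun q : ℝ × ℝ => q - ((1:ℝ), (0:ℝ)))
      (𝓝 ((1:ℝ), (0:ℝ))) (𝓝 0) := by
    have hcont : Continuous fun q : ℝ × ℝ => q - ((1:ℝ), (0:ℝ)) :=
      continuous_id.sub continuous_const
    have h0 := hcont.tendsto ((1:ℝ), (0:ℝ))
    simpa using h0
  filter_upwards [ht.eventually hC] with q hq
  have hqq : ((1:ℝ), (0:ℝ)) + (q - ((1:ℝ), (0:ℝ))) = q := by abel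
  rw [hqq, hps] at hq
  have hw1 : (q - ((1:ℝ), (0:ℝ))).1 = q.1 - 1 := rfl
  have hw2 : (q - ((1:ℝ), (0:ℝ))).2 = q.2 := by
    show q.2 - 0 = q.2; ring
  rw [hw1, hw2] at hq
  have hnorm : ‖q - ((1:ℝ), (0:ℝ))‖ ≤ |q.1 - 1| + |q.2| := by
    rw [Prod.norm_def, hw1, hw2, Real.norm_eq_abs, Real.norm_eq_abs]
    exact max_le (le_add_of_nonneg_right (abs_nonneg _)) (le_add_of_nonneg_left (abs_nonneg _))
  rw [← Real.norm_eq_abs]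
  refine hq.trans ?_
  have hx : ‖‖q - ((1:ℝ), (0:ℝ))‖ ^ 4‖ = ‖q - ((1:ℝ), (0:ℝ))‖ ^ 4 := by
    rw [Real.norm_eq_abs]; exact abs_of_nonneg (by positivity)
  rw [hx]
  have h2 : ‖q - ((1:ℝ), (0:ℝ))‖ ^ 4 ≤ (|q.1 - 1| + |q.2|) ^ 4 :=
    pow_le_pow_left₀ (norm_nonneg _) hnorm 4
  calc C * ‖q - ((1:ℝ), (0:ℝ))‖ ^ 4
      ≤ |C| * ‖q - ((1:ℝ), (0:ℝ))‖ ^ 4 :=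
        mul_le_mul_of_nonneg_right (le_abs_self C) (by positivity)
    _ ≤ |C| * (|q.1 - 1| + |q.2|) ^ 4 := mul_le_mul_of_nonneg_left h2 (abs_nonneg C)

end

lemma deriv_x_line {A : ℝ × ℝ → ℝ} {q : ℝ × ℝ} (hq : AnalyticAt ℝ A q) :
    HasDerivAt (fun x => A (x, q.2)) (fderiv ℝ A q e1) q.1 := by
  have hd : HasFDerivAt A (fderiv ℝ A q) q := hq.differentiableAt.hasFDerivAt
  have hcurve : HasDerivAt (fun x : ℝ => (x, q.2)) ((1:ℝ), (0:ℝ)) q.1 :=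
    (hasDerivAt_id q.1).prodMk (hasDerivAt_const q.1 q.2)
  have heta : (q.1, q.2) = q := Prod.mk.eta
  rw [← heta] at hd
  have h := hd.comp_hasDerivAt q.1 hcurve
  rw [heta] at h
  exact h

lemma deriv_y_line {A : ℝ × ℝ → ℝ} {q : ℝ × ℝ} (hq : AnalyticAt ℝ A q) :
    HasDerivAt (fun y => A (q.1, y)) (fderiv ℝ A q e2) q.2 := by
  have hd : HasFDerivAt A (fderiv ℝ A q) q := hq.differentiableAt.hasFDerivAt
  have hcurve : HasDerivAt (fun y : ℝ => (q.1, y)) ((0:ℝ), (1:ℝ)) q.2 :=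
    (hasDerivAt_const q.2 q.1).prodMk (hasDerivAt_id q.2)
  have heta : (q.1, q.2) = q := Prod.mk.eta
  rw [← heta] at hd
  have h := hd.comp_hasDerivAt q.2 hcurve
  rw [heta] at h
  exact h

end
end GavAux

open Filter in
theorem gavrilov_alpha_taylor' (ψ : ℝ → ℝ)
    (hψa : AnalyticAt ℝ ψ 0) (hψ0 : ψ 0 = 1) (hψd0 : deriv ψ 0 = -(3/4))
    (F : ℝ → ℝ → ℝ) (hF : ∀ x α, F x α = -2*x*ψ α + 2*x^3)
    (H : ℝ → ℝ) (hH : ∀ α, H α = 6*α*(1/deriv ψ α + 2*ψ α))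
    (G : ℝ → ℝ → ℝ) (hG : ∀ x α, G x α = 12*x^2*α - (F x α)^2 - H α)
    (α : ℝ → ℝ → ℝ)
    (hAa : AnalyticAt ℝ (fun q : ℝ × ℝ => α q.1 q.2) (1, 0))
    (hA0 : α 1 0 = 0)
    (hne : ¬ ∀ᶠ q : ℝ × ℝ in nhds (1, 0), deriv (α q.1) q.2 = 0)
    (hsys : ∀ᶠ q : ℝ × ℝ in nhds (1, 0),
      deriv (fun x => α x q.2) q.1 = F q.1 (α q.1 q.2) ∧
      (deriv (α q.1) q.2)^2 = G q.1 (α q.1 q.2)) :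
    ∃ C : ℝ, ∀ᶠ q : ℝ × ℝ in nhds (1, 0),
      |α q.1 q.2 - (2*(q.1 - 1)^2 + 2*q.2^2 + 3*(q.1 - 1)^3 + 3*(q.1 - 1)*q.2^2)|
        ≤ C * (|q.1 - 1| + |q.2|)^4 := by
  set A : ℝ × ℝ → ℝ := fun q => α q.1 q.2 with hAdef
  have hS1 : ∀ᶠ q in 𝓝 ((1:ℝ), (0:ℝ)), GavAux.P1 A q = GavAux.Fc ψ A q := by
    filter_upwards [hsys, hAa.eventually_analyticAt] with q hq hAq
    have hline := GavAux.deriv_x_line (A := A) hAq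
    have hder : deriv (fun x => α x q.2) q.1 = GavAux.P1 A q := hline.deriv
    rw [← hder, hq.1, hF]
    rfl
  have hS2 : ∀ᶠ q in 𝓝 ((1:ℝ), (0:ℝ)), (GavAux.P2 A q)^2 = GavAux.Gc ψ A q := by
    filter_upwards [hsys, hAa.eventually_analyticAt] with q hq hAq
    have hline := GavAux.deriv_y_line (A := A) hAq
    have hder : deriv (α q.1) q.2 = GavAux.P2 A q := hline.deriv
    rw [← hder, hq.2, hG, hF, hH]
    rfl
  have hS3 : ¬ ∀ᶠ q : ℝ × ℝ in 𝓝 ((1:ℝ), (0:ℝ)), GavAux.P2 A q = 0 := by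
    intro hP20
    apply hne
    filter_upwards [hP20, hAa.eventually_analyticAt] with q h0 hAq
    have hline := GavAux.deriv_y_line (A := A) hAq
    have hder : deriv (α q.1) q.2 = GavAux.P2 A q := hline.deriv
    rw [hder, h0]
  have hc : GavAux.Ctx ψ A := ⟨hψa, hψ0, hψd0, hAa, hA0, hS1, hS2, hS3⟩
  exact GavAux.main_bound hc




/-- Remark 4: the Taylor expansion of `α` at `(1,0)` begins
`α(x,y) = 2(x−1)² + 2y² + 3(x−1)³ + 3(x−1)y² + O((|x−1|+|y|)⁴)`. -/
theorem gavrilov_alpha_taylor (ψ : ℝ → ℝ) (h : GavrilovODE ψ)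
    (F : ℝ → ℝ → ℝ) (hF : ∀ x α, F x α = -2*x*ψ α + 2*x^3)
    (H : ℝ → ℝ) (hH : ∀ α, H α = 6*α*(1/deriv ψ α + 2*ψ α))
    (G : ℝ → ℝ → ℝ) (hG : ∀ x α, G x α = 12*x^2*α - (F x α)^2 - H α)
    (α : ℝ → ℝ → ℝ) (hα : SolvesSystem F G α) :
    ∃ C : ℝ, ∀ᶠ q : ℝ × ℝ in nhds (1, 0),
      |α q.1 q.2 - (2*(q.1 - 1)^2 + 2*q.2^2 + 3*(q.1 - 1)^3 + 3*(q.1 - 1)*q.2^2)|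
        ≤ C * (|q.1 - 1| + |q.2|)^4 := by
  obtain ⟨hψa, hψ0, hψd0, -⟩ := h
  obtain ⟨hAa, hA0, hne, hsys⟩ := hα
  exact gavrilov_alpha_taylor' ψ hψa hψ0 hψd0 F hF H hH G hG α hAa hA0 hne hsys
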